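/- arXiv:2304.14329 — 2 statements merged into one kernel-verified Lean document; each statement's English description precedes it below -/
import Mathlib

section
/- Let p ≥ 1 and let M̂ and M⋆ be real (n₁+n₂) × (m₁+m₂) matrices, decomposed into blocks M̂_{ij} and M⋆_{ij} of size n_i × m_j for i, j ∈ {1,2}. Suppose that rank(M̂) ≤ p, rank(M⋆) = p, rank(M⋆₁₁) = p (equivalently σ_p(M⋆₁₁) > 0), and that there exist ε > 0 and M > 0 with ε ≤ σ_p(M⋆₁₁)/2 such that for every (i,j) ≠ (2,2): ‖M̂_{ij} − M⋆_{ij}‖_F ≤ ε and ‖M⋆_{ij}‖_F ≤ M. Then ‖M̂₂₂ − M⋆₂₂‖_F ≤ 8·ε·M² / σ_p(M⋆₁₁)². -/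
open Matrix

/-- Euclidean norm of a finitely indexed real vector. -/
noncomputable def euclNorm {m : Type*} [Fintype m] (v : m → ℝ) : ℝ :=
  Real.sqrt (∑ i, v i ^ 2)

/-- The `p`-th largest singular value of a real matrix, via the Courant–Fischer
max–min characterization:
`σ_p(A) = max { r ≥ 0 | ∃ p-dimensional subspace V, ∀ x ∈ V, r‖x‖ ≤ ‖Ax‖ }`. -/
noncomputable def singularValue {n m : Type*} [Fintype n] [Fintype m] (p : ℕ)
    (A : Matrix n m ℝ) : ℝ :=
  sSup {r : ℝ | 0 ≤ r ∧ ∃ V : Submodule ℝ (m → ℝ), Module.finrank ℝ V = p ∧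
    ∀ x ∈ V, r * euclNorm x ≤ euclNorm (A.mulVec x)}

/-- Frobenius norm of a real matrix. -/
noncomputable def frobNorm {n m : Type*} [Fintype n] [Fintype m] (A : Matrix n m ℝ) : ℝ :=
  Real.sqrt (∑ i, ∑ j, A i j ^ 2)

section AuxNorm

variable {n m k : Type*} [Fintype n] [Fintype m] [Fintype k]

lemma euclNorm_nonneg (v : m → ℝ) : 0 ≤ euclNorm v := Real.sqrt_nonneg _

lemma sq_euclNorm (v : m → ℝ) : euclNorm v ^ 2 = ∑ i, v i ^ 2 := by
  rw [euclNorm, Real.sq_sqrt]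
  positivity

lemma frobNorm_nonneg (A : Matrix n m ℝ) : 0 ≤ frobNorm A := Real.sqrt_nonneg _

lemma sq_frobNorm (A : Matrix n m ℝ) : frobNorm A ^ 2 = ∑ i, ∑ j, A i j ^ 2 := by
  rw [frobNorm, Real.sq_sqrt]
  positivity

lemma euclNorm_eq_norm (v : m → ℝ) :
    euclNorm v = ‖(WithLp.equiv 2 (m → ℝ)).symm v‖ := by
  rw [EuclideanSpace.norm_eq, euclNorm]
  congr 1
  refine Finset.sum_congr rfl fun i _ => ?_
  rw [Real.norm_eq_abs, sq_abs]
  rfl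

lemma euclNorm_add_le (v w : m → ℝ) : euclNorm (v + w) ≤ euclNorm v + euclNorm w := by
  rw [euclNorm_eq_norm, euclNorm_eq_norm, euclNorm_eq_norm]
  simpa using norm_add_le ((WithLp.equiv 2 (m → ℝ)).symm v) ((WithLp.equiv 2 (m → ℝ)).symm w)

lemma euclNorm_neg (v : m → ℝ) : euclNorm (-v) = euclNorm v := by
  simp [euclNorm]

lemma euclNorm_zero : euclNorm (0 : m → ℝ) = 0 := by
  simp [euclNorm]

lemma euclNorm_eq_zero {v : m → ℝ} (h : euclNorm v = 0) : v = 0 := by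
  have hsum : ∑ i, v i ^ 2 = 0 := by
    have h0 : (0:ℝ) ≤ ∑ i, v i ^ 2 := by positivity
    exact Real.sqrt_eq_zero h0 |>.mp h
  funext i
  have := (Finset.sum_eq_zero_iff_of_nonneg (fun i _ => by positivity)).mp hsum i (Finset.mem_univ i)
  exact pow_eq_zero_iff (by norm_num) |>.mp this

lemma euclNorm_pos {v : m → ℝ} (h : v ≠ 0) : 0 < euclNorm v := by
  rcases lt_or_eq_of_le (euclNorm_nonneg v) with h1 | h1
  · exact h1
  · exact absurd (euclNorm_eq_zero h1.symm) h

lemma frobNorm_eq_euclNorm (A : Matrix n m ℝ) :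
    frobNorm A = euclNorm (fun p : n × m => A p.1 p.2) := by
  rw [frobNorm, euclNorm, Fintype.sum_prod_type]

lemma frobNorm_add_le (A B : Matrix n m ℝ) : frobNorm (A + B) ≤ frobNorm A + frobNorm B := by
  rw [frobNorm_eq_euclNorm, frobNorm_eq_euclNorm, frobNorm_eq_euclNorm]
  exact euclNorm_add_le _ _

lemma frobNorm_neg (A : Matrix n m ℝ) : frobNorm (-A) = frobNorm A := by
  simp [frobNorm]

lemma frobNorm_sub_le (A B : Matrix n m ℝ) : frobNorm (A - B) ≤ frobNorm A + frobNorm B := by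
  have := frobNorm_add_le A (-B)
  rwa [← sub_eq_add_neg, frobNorm_neg] at this

lemma sq_frobNorm_col (A : Matrix n m ℝ) :
    frobNorm A ^ 2 = ∑ j, euclNorm (fun i => A i j) ^ 2 := by
  rw [sq_frobNorm, Finset.sum_comm]
  exact Finset.sum_congr rfl fun j _ => (sq_euclNorm _).symm

/-- Cauchy–Schwarz: `‖A x‖ ≤ ‖A‖_F ‖x‖`. -/
lemma euclNorm_mulVec_le (A : Matrix n m ℝ) (x : m → ℝ) :
    euclNorm (A.mulVec x) ≤ frobNorm A * euclNorm x := by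
  have h : euclNorm (A.mulVec x) ^ 2 ≤ (frobNorm A * euclNorm x) ^ 2 := by
    rw [sq_euclNorm, mul_pow, sq_frobNorm, sq_euclNorm, Finset.sum_mul]
    refine Finset.sum_le_sum fun i _ => ?_
    simpa [Matrix.mulVec, dotProduct] using
      Finset.sum_mul_sq_le_sq_mul_sq Finset.univ (fun j => A i j) x
  nlinarith [euclNorm_nonneg (A.mulVec x), frobNorm_nonneg A, euclNorm_nonneg x,
    mul_nonneg (frobNorm_nonneg A) (euclNorm_nonneg x)]

/-- Column-wise comparison gives Frobenius comparison. -/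
lemma frobNorm_le_of_cols {c : ℝ} (hc : 0 ≤ c) (P : Matrix m k ℝ) (Q : Matrix n k ℝ)
    (h : ∀ j, c * euclNorm (fun i => P i j) ≤ euclNorm (fun i => Q i j)) :
    c * frobNorm P ≤ frobNorm Q := by
  have hsq : (c * frobNorm P) ^ 2 ≤ frobNorm Q ^ 2 := by
    rw [mul_pow, sq_frobNorm_col, sq_frobNorm_col, Finset.mul_sum]
    refine Finset.sum_le_sum fun j _ => ?_
    rw [← mul_pow]
    exact pow_le_pow_left₀ (mul_nonneg hc (euclNorm_nonneg _)) (h j) 2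
  nlinarith [frobNorm_nonneg Q, frobNorm_nonneg P, mul_nonneg hc (frobNorm_nonneg P)]

lemma frobNorm_mul_le (A : Matrix n m ℝ) (B : Matrix m k ℝ) :
    frobNorm (A * B) ≤ frobNorm A * frobNorm B := by
  have hsq : frobNorm (A * B) ^ 2 ≤ (frobNorm A * frobNorm B) ^ 2 := by
    rw [mul_pow, sq_frobNorm, sq_frobNorm, sq_frobNorm]
    have step : ∀ i l, (A * B) i l ^ 2 ≤ (∑ j, A i j ^ 2) * (∑ j, B j l ^ 2) := fun i l => by
      simpa [Matrix.mul_apply] using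
        Finset.sum_mul_sq_le_sq_mul_sq Finset.univ (fun j => A i j) (fun j => B j l)
    calc ∑ i, ∑ l, (A * B) i l ^ 2
        ≤ ∑ i, ∑ l, (∑ j, A i j ^ 2) * (∑ j, B j l ^ 2) :=
          Finset.sum_le_sum fun i _ => Finset.sum_le_sum fun l _ => step i l
      _ = (∑ i, ∑ j, A i j ^ 2) * (∑ l, ∑ j, B l j ^ 2) := by
          rw [Finset.sum_mul]
          refine Finset.sum_congr rfl fun i _ => ?_
          rw [← Finset.mul_sum, Finset.sum_comm]
  nlinarith [frobNorm_nonneg (A * B), frobNorm_nonneg A, frobNorm_nonneg B,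
    mul_nonneg (frobNorm_nonneg A) (frobNorm_nonneg B)]

end AuxNorm

/-- The embedding `x ↦ Sum.elim x 0` as a linear map. -/
def sumElimLinear (m₁ m₂ : Type*) : (m₁ → ℝ) →ₗ[ℝ] (m₁ ⊕ m₂ → ℝ) where
  toFun x := Sum.elim x 0
  map_add' x y := by ext (j | j) <;> simp
  map_smul' c x := by ext (j | j) <;> simp

/-- Key construction: if the `(1,1)` block is bounded below on a `p`-dimensional subspace `V`
and the whole matrix has rank at most `p`, then the second block column is obtained from the
first block column by a matrix `B` whose columns lie in `V`. -/
lemma exists_blockColumn_factor {n₁ n₂ m₁ m₂ : Type*} [Fintype n₁] [Fintype n₂] [Fintype m₁]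
    [Fintype m₂] [DecidableEq m₁] [DecidableEq m₂]
    (N : Matrix (n₁ ⊕ n₂) (m₁ ⊕ m₂) ℝ) (p : ℕ) (hrank : N.rank ≤ p)
    (V : Submodule ℝ (m₁ → ℝ)) (hV : Module.finrank ℝ V = p)
    (c : ℝ) (hc : 0 < c)
    (hlow : ∀ x ∈ V, c * euclNorm x ≤ euclNorm (N.toBlocks₁₁.mulVec x)) :
    ∃ B : Matrix m₁ m₂ ℝ, (∀ j, (fun i => B i j) ∈ V) ∧
      N.toBlocks₁₁ * B = N.toBlocks₁₂ ∧ N.toBlocks₂₁ * B = N.toBlocks₂₂ := by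
  classical
  set L : (m₁ → ℝ) →ₗ[ℝ] ((n₁ ⊕ n₂) → ℝ) := N.mulVecLin ∘ₗ sumElimLinear m₁ m₂ with hL
  have hL1 : ∀ (x : m₁ → ℝ) i, L x (Sum.inl i) = N.toBlocks₁₁.mulVec x i := by
    intro x i
    simp [hL, sumElimLinear, Matrix.mulVecLin_apply, Matrix.mulVec, dotProduct,
      Fintype.sum_sum_type, Matrix.toBlocks₁₁]
  have hL2 : ∀ (x : m₁ → ℝ) i, L x (Sum.inr i) = N.toBlocks₂₁.mulVec x i := by
    intro x i
    simp [hL, sumElimLinear, Matrix.mulVecLin_apply, Matrix.mulVec, dotProduct,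
      Fintype.sum_sum_type, Matrix.toBlocks₂₁]
  set L' : V →ₗ[ℝ] ((n₁ ⊕ n₂) → ℝ) := L ∘ₗ V.subtype with hL'
  have hker : LinearMap.ker L' = ⊥ := by
    rw [LinearMap.ker_eq_bot']
    rintro ⟨x, hx⟩ hx0
    have hLx : L x = 0 := hx0
    have hmv : N.toBlocks₁₁.mulVec x = 0 := by
      funext i
      rw [← hL1 x i, hLx]
      rfl
    have h1 : c * euclNorm x ≤ 0 := by
      have := hlow x hx
      rwa [hmv, euclNorm_zero] at this
    have h2 : euclNorm x = 0 := by
      nlinarith [euclNorm_nonneg x]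
    ext
    exact congrFun (euclNorm_eq_zero h2) _
  have hrange : Module.finrank ℝ (LinearMap.range L') = p := by
    have := LinearMap.finrank_range_add_finrank_ker L'
    rw [hker, finrank_bot, add_zero, hV] at this
    exact this
  have hle : LinearMap.range L' ≤ LinearMap.range N.mulVecLin := by
    rintro _ ⟨⟨x, hx⟩, rfl⟩
    exact ⟨sumElimLinear m₁ m₂ x, rfl⟩
  have heq : LinearMap.range L' = LinearMap.range N.mulVecLin := by
    refine Submodule.eq_of_le_of_finrank_le hle ?_
    rw [hrange]
    exact hrank
  have hcol : ∀ j : m₂, ∃ b : m₁ → ℝ, b ∈ V ∧ L b = fun i => N i (Sum.inr j) := by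
    intro j
    have hmem : (fun i => N i (Sum.inr j)) ∈ LinearMap.range N.mulVecLin := by
      refine ⟨Pi.single (Sum.inr j) 1, ?_⟩
      rw [Matrix.mulVecLin_apply, Matrix.mulVec_single]
      funext i
      exact mul_one _
    rw [← heq] at hmem
    obtain ⟨⟨b, hb⟩, hb2⟩ := hmem
    exact ⟨b, hb, hb2⟩
  choose bfun hbV hbL using hcol
  refine ⟨Matrix.of fun i j => bfun j i, fun j => hbV j, ?_, ?_⟩
  · ext i j
    have : (N.toBlocks₁₁ * Matrix.of fun i j => bfun j i) i j
        = N.toBlocks₁₁.mulVec (bfun j) i := by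
      simp [Matrix.mul_apply, Matrix.mulVec, dotProduct]
    rw [this, ← hL1, hbL]
    simp [Matrix.toBlocks₁₂]
  · ext i j
    have : (N.toBlocks₂₁ * Matrix.of fun i j => bfun j i) i j
        = N.toBlocks₂₁.mulVec (bfun j) i := by
      simp [Matrix.mul_apply, Matrix.mulVec, dotProduct]
    rw [this, ← hL2, hbL]
    simp [Matrix.toBlocks₂₂]

set_option maxHeartbeats 1000000 in
/-- Extrapolation guarantee for four-block matrix completion:
if `rank M̂ ≤ p`, `rank M⋆ = p`, `rank M⋆₁₁ = p` (equivalently `σ_p(M⋆₁₁) > 0`), and on all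
blocks `(i,j) ≠ (2,2)` we have `‖M̂ᵢⱼ − M⋆ᵢⱼ‖_F ≤ ε ≤ σ_p(M⋆₁₁)/2` and `‖M⋆ᵢⱼ‖_F ≤ M`,
then `‖M̂₂₂ − M⋆₂₂‖_F ≤ 8 ε M² / σ_p(M⋆₁₁)²`. -/
theorem matrix_completion_block_extrapolation
    {n₁ n₂ m₁ m₂ p : ℕ} (hp : 1 ≤ p)
    (Mhat Mstar : Matrix (Fin n₁ ⊕ Fin n₂) (Fin m₁ ⊕ Fin m₂) ℝ)
    (hrank_hat : Mhat.rank ≤ p)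
    (hrank_star : Mstar.rank = p)
    (hrank_star11 : (Mstar.toBlocks₁₁).rank = p)
    (ε M : ℝ) (hε : 0 < ε) (hM : 0 < M)
    (hεσ : ε ≤ singularValue p (Mstar.toBlocks₁₁) / 2)
    (hdiff11 : frobNorm (Mhat.toBlocks₁₁ - Mstar.toBlocks₁₁) ≤ ε)
    (hdiff12 : frobNorm (Mhat.toBlocks₁₂ - Mstar.toBlocks₁₂) ≤ ε)
    (hdiff21 : frobNorm (Mhat.toBlocks₂₁ - Mstar.toBlocks₂₁) ≤ ε)
    (hbound11 : frobNorm (Mstar.toBlocks₁₁) ≤ M)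
    (hbound12 : frobNorm (Mstar.toBlocks₁₂) ≤ M)
    (hbound21 : frobNorm (Mstar.toBlocks₂₁) ≤ M) :
    frobNorm (Mhat.toBlocks₂₂ - Mstar.toBlocks₂₂) ≤
      8 * ε * M ^ 2 / (singularValue p (Mstar.toBlocks₁₁)) ^ 2 := by
  classical
  set A := Mstar.toBlocks₁₁ with hA
  set σ := singularValue p A with hσ
  set S : Set ℝ := {r : ℝ | 0 ≤ r ∧ ∃ V : Submodule ℝ ((Fin m₁) → ℝ),
    Module.finrank ℝ V = p ∧ ∀ x ∈ V, r * euclNorm x ≤ euclNorm (A.mulVec x)} with hS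
  have hσS : σ = sSup S := rfl
  have hσpos : 0 < σ := by linarith
  have hSne : S.Nonempty := by
    by_contra h
    rw [Set.not_nonempty_iff_eq_empty] at h
    rw [hσS, h, Real.sSup_empty] at hσpos
    exact lt_irrefl 0 hσpos
  have hbdd : ∀ r ∈ S, r ≤ frobNorm A := by
    rintro r ⟨hr0, V, hVr, hVle⟩
    have hVne : V ≠ ⊥ := by
      intro hbot
      rw [hbot, finrank_bot] at hVr
      omega
    obtain ⟨x, hxV, hx0⟩ := Submodule.ne_bot_iff V |>.mp hVne
    have h1 := hVle x hxV
    have h2 := euclNorm_mulVec_le A x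
    have h3 := euclNorm_pos hx0
    nlinarith
  have hσleF : σ ≤ frobNorm A := csSup_le hSne hbdd
  have hσleM : σ ≤ M := le_trans hσleF hbound11
  obtain ⟨s, hsS, hs⟩ := exists_lt_of_lt_csSup hSne
    (show (24/25 : ℝ) * σ < σ by nlinarith)
  obtain ⟨hs0, V, hVp, hVle⟩ := hsS
  -- lower bound for the perturbed block
  have hεhalf : ε ≤ σ / 2 := hεσ
  have hsε : (0:ℝ) < s - ε := by nlinarith
  have hlowhat : ∀ x ∈ V, (s - ε) * euclNorm x ≤ euclNorm (Mhat.toBlocks₁₁.mulVec x) := by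
    intro x hx
    have h1 := hVle x hx
    have h2 : euclNorm (A.mulVec x)
        ≤ euclNorm (Mhat.toBlocks₁₁.mulVec x)
          + euclNorm ((Mhat.toBlocks₁₁ - A).mulVec x) := by
      have hid : A.mulVec x
          = Mhat.toBlocks₁₁.mulVec x + -((Mhat.toBlocks₁₁ - A).mulVec x) := by
        rw [Matrix.sub_mulVec]
        abel
      rw [hid]
      calc euclNorm (Mhat.toBlocks₁₁.mulVec x + -((Mhat.toBlocks₁₁ - A).mulVec x))
          ≤ euclNorm (Mhat.toBlocks₁₁.mulVec x)
            + euclNorm (-((Mhat.toBlocks₁₁ - A).mulVec x)) := euclNorm_add_le _ _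
        _ = _ := by rw [euclNorm_neg]
    have h3 : euclNorm ((Mhat.toBlocks₁₁ - A).mulVec x) ≤ ε * euclNorm x := by
      calc euclNorm ((Mhat.toBlocks₁₁ - A).mulVec x)
          ≤ frobNorm (Mhat.toBlocks₁₁ - A) * euclNorm x := euclNorm_mulVec_le _ _
        _ ≤ ε * euclNorm x := mul_le_mul_of_nonneg_right hdiff11 (euclNorm_nonneg x)
    nlinarith [euclNorm_nonneg x]
  -- factor both matrices through V
  obtain ⟨Bh, hBhV, hBh1, hBh2⟩ := exists_blockColumn_factor Mhat p hrank_hat V hVp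
    (s - ε) hsε hlowhat
  obtain ⟨Bs, hBsV, hBs1, hBs2⟩ := exists_blockColumn_factor Mstar p (le_of_eq hrank_star) V hVp
    s (by nlinarith) hVle
  set D := Bh - Bs with hD
  -- column identity for products
  have colmul : ∀ (X : Matrix (Fin n₁) (Fin m₁) ℝ) (B : Matrix (Fin m₁) (Fin m₂) ℝ)
      (j : Fin m₂), (fun i => (X * B) i j) = X.mulVec (fun k => B k j) := by
    intro X B j
    funext i
    simp [Matrix.mul_apply, Matrix.mulVec, dotProduct]
  -- Frobenius bound on Bh
  have hbBh : (s - ε) * frobNorm Bh ≤ frobNorm Mhat.toBlocks₁₂ := by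
    refine frobNorm_le_of_cols hsε.le Bh Mhat.toBlocks₁₂ fun j => ?_
    have : (fun i => Mhat.toBlocks₁₂ i j) = Mhat.toBlocks₁₁.mulVec (fun k => Bh k j) := by
      rw [← hBh1]; exact colmul _ _ j
    rw [this]
    exact hlowhat _ (hBhV j)
  have hfro12 : frobNorm Mhat.toBlocks₁₂ ≤ M + ε := by
    have h1 := frobNorm_add_le (Mhat.toBlocks₁₂ - Mstar.toBlocks₁₂) Mstar.toBlocks₁₂
    rw [sub_add_cancel] at h1
    linarith
  -- Frobenius bound on D
  have hdD : s * frobNorm D ≤ frobNorm (A * D) := by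
    refine frobNorm_le_of_cols (by linarith) D (A * D) fun j => ?_
    rw [colmul A D j]
    exact hVle _ (Submodule.sub_mem V (hBhV j) (hBsV j))
  have hADid : A * D = (Mhat.toBlocks₁₂ - Mstar.toBlocks₁₂)
      - (Mhat.toBlocks₁₁ - A) * Bh := by
    rw [hD, Matrix.mul_sub, hBs1, Matrix.sub_mul, hBh1]
    abel
  have hADle : frobNorm (A * D) ≤ ε + ε * frobNorm Bh := by
    rw [hADid]
    calc frobNorm ((Mhat.toBlocks₁₂ - Mstar.toBlocks₁₂) - (Mhat.toBlocks₁₁ - A) * Bh)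
        ≤ frobNorm (Mhat.toBlocks₁₂ - Mstar.toBlocks₁₂)
          + frobNorm ((Mhat.toBlocks₁₁ - A) * Bh) := frobNorm_sub_le _ _
      _ ≤ ε + frobNorm (Mhat.toBlocks₁₁ - A) * frobNorm Bh := by
          have := frobNorm_mul_le (Mhat.toBlocks₁₁ - A) Bh
          linarith
      _ ≤ ε + ε * frobNorm Bh := by
          have := mul_le_mul_of_nonneg_right hdiff11 (frobNorm_nonneg Bh)
          linarith
  -- final matrix identity
  have hfinal : Mhat.toBlocks₂₂ - Mstar.toBlocks₂₂
      = (Mhat.toBlocks₂₁ - Mstar.toBlocks₂₁) * Bh + Mstar.toBlocks₂₁ * D := by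
    rw [hD, Matrix.mul_sub, hBs2, Matrix.sub_mul, hBh2]
    abel
  have hF : frobNorm (Mhat.toBlocks₂₂ - Mstar.toBlocks₂₂)
      ≤ ε * frobNorm Bh + M * frobNorm D := by
    rw [hfinal]
    calc frobNorm ((Mhat.toBlocks₂₁ - Mstar.toBlocks₂₁) * Bh + Mstar.toBlocks₂₁ * D)
        ≤ frobNorm ((Mhat.toBlocks₂₁ - Mstar.toBlocks₂₁) * Bh)
          + frobNorm (Mstar.toBlocks₂₁ * D) := frobNorm_add_le _ _
      _ ≤ frobNorm (Mhat.toBlocks₂₁ - Mstar.toBlocks₂₁) * frobNorm Bh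
          + frobNorm Mstar.toBlocks₂₁ * frobNorm D := by
          have h1 := frobNorm_mul_le (Mhat.toBlocks₂₁ - Mstar.toBlocks₂₁) Bh
          have h2 := frobNorm_mul_le Mstar.toBlocks₂₁ D
          linarith
      _ ≤ ε * frobNorm Bh + M * frobNorm D := by
          have h1 := mul_le_mul_of_nonneg_right hdiff21 (frobNorm_nonneg Bh)
          have h2 := mul_le_mul_of_nonneg_right hbound21 (frobNorm_nonneg D)
          linarith
  -- arithmetic
  set b := frobNorm Bh with hb
  set d := frobNorm D with hd
  have hb0 : 0 ≤ b := frobNorm_nonneg _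
  have hd0 : 0 ≤ d := frobNorm_nonneg _
  have hsd : s * d ≤ ε + ε * b := le_trans hdD hADle
  have hsb : (s - ε) * b ≤ M + ε := le_trans hbBh hfro12
  have hσb : σ * b ≤ (75/23) * M := by nlinarith
  have hσd : σ * d ≤ (25/24) * (ε + ε * b) := by nlinarith
  rw [le_div_iff₀ (by positivity : (0:ℝ) < σ ^ 2)]
  have e1 : ε * b * σ ^ 2 ≤ (75/23) * M * (ε * σ) := by
    linarith [mul_le_mul_of_nonneg_right hσb (le_of_lt (mul_pos hε hσpos))]
  have e2 : M * (ε * σ) ≤ M * (ε * M) := by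
    have : ε * σ ≤ ε * M := mul_le_mul_of_nonneg_left hσleM hε.le
    exact mul_le_mul_of_nonneg_left this hM.le
  have e3 : M * d * σ ^ 2 ≤ (25/24) * (ε + ε * b) * (M * σ) := by
    linarith [mul_le_mul_of_nonneg_right hσd (le_of_lt (mul_pos hM hσpos))]
  have e4 : (ε + ε * b) * (M * σ) ≤ ε * M * M + (75/23) * ε * M * M := by
    linarith [mul_le_mul_of_nonneg_right hσb (le_of_lt (mul_pos hε hM)), e2]
  have e0 : frobNorm (Mhat.toBlocks₂₂ - Mstar.toBlocks₂₂) * σ ^ 2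
      ≤ (ε * b + M * d) * σ ^ 2 := mul_le_mul_of_nonneg_right hF (sq_nonneg σ)
  have eM : (0:ℝ) ≤ ε * M * M := by positivity
  linarith [e0, e1, e2, e3, e4, eM]
end

section
/- Let W = {w₁, …, w_d} and V = {v₁, …, v_d} be finite sets equipped with probability weights (p_a)_{a=1}^d on W and (q_b)_{b=1}^d on V, and let f : W → ℝ^p and g : V → ℝ^p. Define the d × d real matrix M with entries M_{ab} = √(p_a·q_b)·⟨f(w_a), g(v_b)⟩. Then σ_p(M)² ≥ σ_p(Σ_{a=1}^d p_a f(w_a) f(w_a)ᵀ) · σ_p(Σ_{b=1}^d q_b g(v_b) g(v_b)ᵀ). -/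
open Matrix

open scoped RealInnerProductSpace

namespace SVAux

lemma euclNorm_eq_norm {n : ℕ} (v : EuclideanSpace ℝ (Fin n)) :
    euclNorm (WithLp.equiv 2 (Fin n → ℝ) v) = ‖v‖ := by
  rw [EuclideanSpace.norm_eq, euclNorm]
  congr 1
  refine Finset.sum_congr rfl fun i _ => ?_
  rw [Real.norm_eq_abs, sq_abs]
  rfl

lemma euclNorm_eq_norm' {n : ℕ} (v : Fin n → ℝ) :
    euclNorm v = ‖(WithLp.equiv 2 (Fin n → ℝ)).symm v‖ := by
  simpa using euclNorm_eq_norm ((WithLp.equiv 2 (Fin n → ℝ)).symm v)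

lemma inner_eq_dot {n : ℕ} (x y : EuclideanSpace ℝ (Fin n)) :
    ⟪x, y⟫ = (WithLp.equiv 2 (Fin n → ℝ) x) ⬝ᵥ (WithLp.equiv 2 (Fin n → ℝ) y) := by
  simp [PiLp.inner_apply, RCLike.inner_apply, dotProduct]
  exact Finset.sum_congr rfl fun i _ => mul_comm _ _

lemma euclNorm_sq {n : ℕ} (v : Fin n → ℝ) : euclNorm v ^ 2 = v ⬝ᵥ v := by
  rw [euclNorm, Real.sq_sqrt (by positivity)]
  simp [dotProduct, sq]


lemma spectral {n : ℕ} (T : EuclideanSpace ℝ (Fin n) →ₗ[ℝ] EuclideanSpace ℝ (Fin n))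
    (hT : T.IsSymmetric) (hpos : ∀ x, 0 ≤ ⟪x, T x⟫) {s : ℝ} (hs : 0 ≤ s)
    (h : ∀ x, s * ‖x‖ ≤ ‖T x‖) :
    (∀ x, s * ‖x‖ ^ 2 ≤ ⟪x, T x⟫) ∧ (∀ x, s * ⟪x, T x⟫ ≤ ‖T x‖ ^ 2) := by
  have hfr : Module.finrank ℝ (EuclideanSpace ℝ (Fin n)) = n := finrank_euclideanSpace_fin
  set b := hT.eigenvectorBasis hfr with hb
  set μ := hT.eigenvalues hfr with hμ
  have hTb : ∀ i, T (b i) = μ i • b i := fun i => by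
    exact_mod_cast hT.apply_eigenvectorBasis hfr i
  have hnb : ∀ i, ‖b i‖ = 1 := fun i => b.orthonormal.1 i
  have hμs : ∀ i, s ≤ μ i := by
    intro i
    have h3 : 0 ≤ μ i := by
      have := hpos (b i)
      rw [hTb i, real_inner_smul_right, real_inner_self_eq_norm_sq, hnb i] at this
      simpa using this
    have h2 := h (b i)
    rw [hTb i, norm_smul, hnb i] at h2
    rw [Real.norm_eq_abs, abs_of_nonneg h3] at h2
    linarith
  have hbx : ∀ i (x : EuclideanSpace ℝ (Fin n)), ⟪b i, T x⟫ = μ i * ⟪x, b i⟫ := by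
    intro i x
    rw [← hT (b i) x, hTb i, real_inner_smul_left, real_inner_comm]
  have hbx' : ∀ i (x : EuclideanSpace ℝ (Fin n)), ⟪T x, b i⟫ = μ i * ⟪x, b i⟫ := by
    intro i x
    rw [real_inner_comm]; exact hbx i x
  have exp2 : ∀ x : EuclideanSpace ℝ (Fin n), ‖x‖ ^ 2 = ∑ i, ⟪x, b i⟫ ^ 2 := by
    intro x
    rw [← real_inner_self_eq_norm_sq, ← b.sum_inner_mul_inner x x]
    refine Finset.sum_congr rfl fun i _ => ?_
    rw [real_inner_comm (b i) x, sq]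
  have exp1 : ∀ x : EuclideanSpace ℝ (Fin n), ⟪x, T x⟫ = ∑ i, μ i * ⟪x, b i⟫ ^ 2 := by
    intro x
    rw [← b.sum_inner_mul_inner x (T x)]
    refine Finset.sum_congr rfl fun i _ => ?_
    rw [hbx i x]; ring
  have exp3 : ∀ x : EuclideanSpace ℝ (Fin n), ‖T x‖ ^ 2 = ∑ i, (μ i * ⟪x, b i⟫) ^ 2 := by
    intro x
    rw [← real_inner_self_eq_norm_sq, ← b.sum_inner_mul_inner (T x) (T x)]
    refine Finset.sum_congr rfl fun i _ => ?_
    rw [hbx i x, hbx' i x]; ring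
  constructor
  · intro x
    rw [exp2, exp1, Finset.mul_sum]
    refine Finset.sum_le_sum fun i _ => ?_
    exact mul_le_mul_of_nonneg_right (hμs i) (sq_nonneg _)
  · intro x
    rw [exp1, exp3, Finset.mul_sum]
    refine Finset.sum_le_sum fun i _ => ?_
    have h1 : 0 ≤ μ i * ⟪x, b i⟫ ^ 2 := mul_nonneg (hs.trans (hμs i)) (sq_nonneg _)
    calc s * (μ i * ⟪x, b i⟫ ^ 2) ≤ μ i * (μ i * ⟪x, b i⟫ ^ 2) :=
          mul_le_mul_of_nonneg_right (hμs i) h1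
      _ = (μ i * ⟪x, b i⟫) ^ 2 := by ring
lemma dot_transpose_mul {d p : ℕ} (H : Matrix (Fin d) (Fin p) ℝ) (x : Fin p → ℝ) :
    x ⬝ᵥ ((Hᵀ * H) *ᵥ x) = (H *ᵥ x) ⬝ᵥ (H *ᵥ x) := by
  rw [← mulVec_mulVec, dotProduct_mulVec, vecMul_transpose]

lemma isSymm_toEuclideanLin {n : ℕ} (A : Matrix (Fin n) (Fin n) ℝ) (hA : Aᵀ = A) :
    (Matrix.toEuclideanLin A).IsSymmetric := by
  intro x y
  rw [inner_eq_dot, inner_eq_dot, toEuclideanLin_apply, toEuclideanLin_apply]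
  simp only [Equiv.apply_symm_apply, WithLp.equiv_apply, WithLp.equiv_symm_apply, WithLp.ofLp_toLp]
  rw [dotProduct_mulVec, ← hA, vecMul_transpose, hA, dotProduct_comm]

lemma norm_toEuclideanLin {n m : ℕ} (A : Matrix (Fin n) (Fin m) ℝ) (x : Fin m → ℝ) :
    ‖Matrix.toEuclideanLin A ((WithLp.equiv 2 (Fin m → ℝ)).symm x)‖ = euclNorm (A *ᵥ x) := by
  rw [euclNorm_eq_norm', toEuclideanLin_apply]
  simp

lemma inner_toEuclideanLin {n : ℕ} (A : Matrix (Fin n) (Fin n) ℝ) (x : Fin n → ℝ) :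
    ⟪(WithLp.equiv 2 (Fin n → ℝ)).symm x,
      Matrix.toEuclideanLin A ((WithLp.equiv 2 (Fin n → ℝ)).symm x)⟫ = x ⬝ᵥ (A *ᵥ x) := by
  rw [inner_eq_dot, toEuclideanLin_apply]
  simp

lemma sv_set_bddAbove {n m p : ℕ} (hp : 0 < p) (M : Matrix (Fin n) (Fin m) ℝ) :
    BddAbove {r : ℝ | 0 ≤ r ∧ ∃ V : Submodule ℝ ((Fin m) → ℝ), Module.finrank ℝ V = p ∧
      ∀ x ∈ V, r * euclNorm x ≤ euclNorm (M.mulVec x)} := by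
  refine ⟨‖(Matrix.toEuclideanLin M).toContinuousLinearMap‖, ?_⟩
  rintro r ⟨hr0, V, hV, hVle⟩
  have hVbot : V ≠ ⊥ := by
    intro h
    rw [h, finrank_bot] at hV
    omega
  obtain ⟨x, hxV, hx0⟩ := Submodule.exists_mem_ne_zero_of_ne_bot hVbot
  have hxn : 0 < euclNorm x := by
    rw [euclNorm_eq_norm']
    simp only [norm_pos_iff]
    intro h
    apply hx0
    have := congrArg (WithLp.equiv 2 (Fin m → ℝ)) h
    simpa using this
  have h1 := hVle x hxV
  have h2 : euclNorm (M *ᵥ x) ≤ ‖(Matrix.toEuclideanLin M).toContinuousLinearMap‖ * euclNorm x := by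
    rw [← norm_toEuclideanLin, euclNorm_eq_norm']
    have := (Matrix.toEuclideanLin M).toContinuousLinearMap.le_opNorm
      ((WithLp.equiv 2 (Fin m → ℝ)).symm x)
    simpa using this
  have := h1.trans h2
  exact le_of_mul_le_mul_right this hxn

lemma sv_p_zero {n m : ℕ} (M : Matrix (Fin n) (Fin m) ℝ) : singularValue 0 M = 0 := by
  rw [singularValue]
  apply Real.sSup_of_not_bddAbove
  rintro ⟨c, hc⟩
  have hmem : ∀ t : ℝ, 0 ≤ t → t ∈ {r : ℝ | 0 ≤ r ∧ ∃ V : Submodule ℝ ((Fin m) → ℝ),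
      Module.finrank ℝ V = 0 ∧ ∀ x ∈ V, r * euclNorm x ≤ euclNorm (M.mulVec x)} := by
    intro t ht
    refine ⟨ht, ⊥, finrank_bot ℝ _, ?_⟩
    intro x hx
    rw [Submodule.mem_bot] at hx
    subst hx
    have h1 : euclNorm (0 : Fin m → ℝ) = 0 := by simp [euclNorm]
    rw [h1, mul_zero]
    exact Real.sqrt_nonneg _
  have := hc (hmem (max c 0 + 1) (by positivity))
  have h2 := le_max_left c 0
  linarith

lemma sup_mul_sup_le {S T : Set ℝ} {c : ℝ} (hc : 0 ≤ c) (hS : ∀ x ∈ S, 0 ≤ x)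
    (hT : ∀ x ∈ T, 0 ≤ x) (h : ∀ x ∈ S, ∀ y ∈ T, x * y ≤ c) : sSup S * sSup T ≤ c := by
  have hT0 : 0 ≤ sSup T := Real.sSup_nonneg hT
  rcases hT0.eq_or_lt with h0 | h0
  · rw [← h0, mul_zero]; exact hc
  · have hmain : sSup S ≤ c / sSup T := by
      apply Real.sSup_le _ (by positivity)
      intro x hx
      rw [le_div_iff₀ h0]
      rcases (hS x hx).eq_or_lt with hx0 | hx0
      · rw [← hx0, zero_mul]; exact hc
      · have hT2 : sSup T ≤ c / x := by
          apply Real.sSup_le _ (by positivity)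
          intro y hy
          rw [le_div_iff₀ hx0]
          rw [mul_comm]
          exact h x hx y hy
        calc x * sSup T ≤ x * (c / x) := mul_le_mul_of_nonneg_left hT2 hx0.le
          _ = c := by field_simp
    calc sSup S * sSup T ≤ (c / sSup T) * sSup T := mul_le_mul_of_nonneg_right hmain h0.le
      _ = c := by field_simp
lemma core {d p : ℕ} (hp : 0 < p) (F G : Matrix (Fin d) (Fin p) ℝ) {r s : ℝ}
    (hr : 0 < r) (hs : 0 < s)
    (hA : ∀ x : Fin p → ℝ, r * euclNorm x ≤ euclNorm ((Fᵀ * F) *ᵥ x))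
    (hB : ∀ x : Fin p → ℝ, s * euclNorm x ≤ euclNorm ((Gᵀ * G) *ᵥ x)) :
    r * s ≤ (singularValue p (F * Gᵀ)) ^ 2 := by
  set A := Fᵀ * F with hAdef
  set B := Gᵀ * G with hBdef
  set TA := Matrix.toEuclideanLin A with hTA
  set TB := Matrix.toEuclideanLin B with hTB
  have e := WithLp.equiv 2 (Fin p → ℝ)
  have hsymA : (Aᵀ : Matrix (Fin p) (Fin p) ℝ) = A := by
    rw [hAdef, transpose_mul, transpose_transpose]
  have hsymB : (Bᵀ : Matrix (Fin p) (Fin p) ℝ) = B := by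
    rw [hBdef, transpose_mul, transpose_transpose]
  have hposA : ∀ x, 0 ≤ ⟪x, TA x⟫ := by
    intro x
    have h1 : x = (WithLp.equiv 2 (Fin p → ℝ)).symm (WithLp.equiv 2 (Fin p → ℝ) x) := by simp
    rw [h1, inner_toEuclideanLin, hAdef, dot_transpose_mul]
    exact Finset.sum_nonneg fun i _ => mul_self_nonneg _
  have hposB : ∀ x, 0 ≤ ⟪x, TB x⟫ := by
    intro x
    have h1 : x = (WithLp.equiv 2 (Fin p → ℝ)).symm (WithLp.equiv 2 (Fin p → ℝ) x) := by simp
    rw [h1, inner_toEuclideanLin, hBdef, dot_transpose_mul]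
    exact Finset.sum_nonneg fun i _ => mul_self_nonneg _
  have hA' : ∀ x, r * ‖x‖ ≤ ‖TA x‖ := by
    intro x
    have h1 : x = (WithLp.equiv 2 (Fin p → ℝ)).symm (WithLp.equiv 2 (Fin p → ℝ) x) := by simp
    rw [h1, norm_toEuclideanLin, ← euclNorm_eq_norm]
    exact hA _
  have hB' : ∀ x, s * ‖x‖ ≤ ‖TB x‖ := by
    intro x
    have h1 : x = (WithLp.equiv 2 (Fin p → ℝ)).symm (WithLp.equiv 2 (Fin p → ℝ) x) := by simp
    rw [h1, norm_toEuclideanLin, ← euclNorm_eq_norm]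
    exact hB _
  obtain ⟨specA1, _⟩ := spectral TA (isSymm_toEuclideanLin A hsymA) hposA hr.le hA'
  obtain ⟨specB1, specB2⟩ := spectral TB (isSymm_toEuclideanLin B hsymB) hposB hs.le hB'
  -- injectivity of G.mulVecLin
  have hinj : Function.Injective (G.mulVecLin) := by
    rw [← LinearMap.ker_eq_bot]
    rw [LinearMap.ker_eq_bot']
    intro x hx
    rw [Matrix.mulVecLin_apply] at hx
    have h1 := specB1 ((WithLp.equiv 2 (Fin p → ℝ)).symm x)
    rw [inner_toEuclideanLin, hBdef, dot_transpose_mul, hx] at h1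
    simp only [dotProduct_zero] at h1
    have h2 : ‖(WithLp.equiv 2 (Fin p → ℝ)).symm x‖ ^ 2 ≤ 0 := by nlinarith
    have h3 : ‖(WithLp.equiv 2 (Fin p → ℝ)).symm x‖ = 0 := by nlinarith [norm_nonneg ((WithLp.equiv 2 (Fin p → ℝ)).symm x), sq_nonneg ‖(WithLp.equiv 2 (Fin p → ℝ)).symm x‖]
    rw [norm_eq_zero] at h3
    have := congrArg (WithLp.equiv 2 (Fin p → ℝ)) h3
    simpa using this
  have hrank : Module.finrank ℝ (LinearMap.range G.mulVecLin) = p := by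
    have h1 := LinearMap.finrank_range_add_finrank_ker (G.mulVecLin)
    rw [LinearMap.ker_eq_bot.mpr hinj, finrank_bot] at h1
    rw [Module.finrank_fin_fun] at h1
    omega
  -- the key membership
  have hrs : (0:ℝ) ≤ r * s := by positivity
  have hmem : Real.sqrt (r * s) ∈ {t : ℝ | 0 ≤ t ∧ ∃ V : Submodule ℝ ((Fin d) → ℝ),
      Module.finrank ℝ V = p ∧ ∀ y ∈ V, t * euclNorm y ≤ euclNorm ((F * Gᵀ).mulVec y)} := by
    refine ⟨Real.sqrt_nonneg _, LinearMap.range G.mulVecLin, hrank, ?_⟩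
    rintro y ⟨x, rfl⟩
    rw [Matrix.mulVecLin_apply]
    -- key chain of inequalities on squares
    have hMy : (F * Gᵀ) *ᵥ (G *ᵥ x) = F *ᵥ (B *ᵥ x) := by
      rw [mulVec_mulVec, mulVec_mulVec, hBdef, Matrix.mul_assoc]
    have h1 : euclNorm ((F * Gᵀ) *ᵥ (G *ᵥ x)) ^ 2 = (B *ᵥ x) ⬝ᵥ (A *ᵥ (B *ᵥ x)) := by
      rw [hMy, euclNorm_sq, hAdef, ← dot_transpose_mul]
    have h2 : r * euclNorm (B *ᵥ x) ^ 2 ≤ (B *ᵥ x) ⬝ᵥ (A *ᵥ (B *ᵥ x)) := by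
      have := specA1 ((WithLp.equiv 2 (Fin p → ℝ)).symm (B *ᵥ x))
      rw [inner_toEuclideanLin, ← euclNorm_eq_norm'] at this
      exact this
    have h3 : s * euclNorm (G *ᵥ x) ^ 2 ≤ euclNorm (B *ᵥ x) ^ 2 := by
      have := specB2 ((WithLp.equiv 2 (Fin p → ℝ)).symm x)
      rw [inner_toEuclideanLin, hTB, norm_toEuclideanLin] at this
      rw [hBdef, dot_transpose_mul, ← euclNorm_sq] at this
      exact this
    have hsq : (r * s) * euclNorm (G *ᵥ x) ^ 2 ≤ euclNorm ((F * Gᵀ) *ᵥ (G *ᵥ x)) ^ 2 := by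
      rw [h1]
      calc (r * s) * euclNorm (G *ᵥ x) ^ 2 = r * (s * euclNorm (G *ᵥ x) ^ 2) := by ring
        _ ≤ r * euclNorm (B *ᵥ x) ^ 2 := mul_le_mul_of_nonneg_left h3 hr.le
        _ ≤ _ := h2
    -- take square roots
    have hgn : 0 ≤ euclNorm (G *ᵥ x) := Real.sqrt_nonneg _
    have hMn : 0 ≤ euclNorm ((F * Gᵀ) *ᵥ (G *ᵥ x)) := Real.sqrt_nonneg _
    have hsq' : (Real.sqrt (r * s) * euclNorm (G *ᵥ x)) ^ 2
        ≤ euclNorm ((F * Gᵀ) *ᵥ (G *ᵥ x)) ^ 2 := by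
      rw [mul_pow, Real.sq_sqrt hrs]
      exact hsq
    calc Real.sqrt (r * s) * euclNorm (G *ᵥ x)
        = Real.sqrt ((Real.sqrt (r * s) * euclNorm (G *ᵥ x)) ^ 2) := by
          rw [Real.sqrt_sq (by positivity)]
      _ ≤ Real.sqrt (euclNorm ((F * Gᵀ) *ᵥ (G *ᵥ x)) ^ 2) := Real.sqrt_le_sqrt hsq'
      _ = euclNorm ((F * Gᵀ) *ᵥ (G *ᵥ x)) := Real.sqrt_sq hMn
  have hle : Real.sqrt (r * s) ≤ singularValue p (F * Gᵀ) := by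
    rw [singularValue]
    exact le_csSup (sv_set_bddAbove hp _) hmem
  calc r * s = Real.sqrt (r * s) ^ 2 := (Real.sq_sqrt hrs).symm
    _ ≤ (singularValue p (F * Gᵀ)) ^ 2 :=
        pow_le_pow_left₀ (Real.sqrt_nonneg _) hle 2

end SVAux

open SVAux in
/-- For finite sets `W = {w₁,…,w_d}`, `V = {v₁,…,v_d}` with probability
weights `(p_a)`, `(q_b)`, and embeddings `f, g` into `ℝ^p`, the matrix
`M_{ab} = √(p_a q_b) ⟨f(w_a), g(v_b)⟩` satisfies
`σ_p(M)² ≥ σ_p(Σ_a p_a f(w_a)f(w_a)ᵀ) · σ_p(Σ_b q_b g(v_b)g(v_b)ᵀ)`. -/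
theorem singularValue_sq_ge_of_weighted_gram
    {d p : ℕ} (pw qw : Fin d → ℝ)
    (hpw : ∀ a, 0 ≤ pw a) (hqw : ∀ b, 0 ≤ qw b)
    (hpsum : ∑ a, pw a = 1) (hqsum : ∑ b, qw b = 1)
    (f g : Fin d → Fin p → ℝ)
    (M : Matrix (Fin d) (Fin d) ℝ)
    (hM : ∀ a b, M a b = Real.sqrt (pw a * qw b) * (f a ⬝ᵥ g b)) :
    singularValue p (∑ a, pw a • vecMulVec (f a) (f a)) *
        singularValue p (∑ b, qw b • vecMulVec (g b) (g b)) ≤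
      (singularValue p M) ^ 2 := by
  rcases Nat.eq_zero_or_pos p with hp0 | hp
  · subst hp0
    rw [sv_p_zero, sv_p_zero, mul_zero]
    exact sq_nonneg _
  -- define the square-root factor matrices
  set F : Matrix (Fin d) (Fin p) ℝ := fun a i => Real.sqrt (pw a) * f a i with hF
  set G : Matrix (Fin d) (Fin p) ℝ := fun b i => Real.sqrt (qw b) * g b i with hG
  have hAF : (∑ a, pw a • vecMulVec (f a) (f a)) = Fᵀ * F := by
    ext i j
    rw [Matrix.mul_apply]
    rw [Matrix.sum_apply]
    refine Finset.sum_congr rfl fun a _ => ?_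
    simp only [Matrix.smul_apply, smul_eq_mul, vecMulVec_apply, transpose_apply, hF, Matrix.transpose, Matrix.of_apply]
    have h := Real.sq_sqrt (hpw a)
    linear_combination (-(f a i * f a j)) * h

  have hBG : (∑ b, qw b • vecMulVec (g b) (g b)) = Gᵀ * G := by
    ext i j
    rw [Matrix.mul_apply]
    rw [Matrix.sum_apply]
    refine Finset.sum_congr rfl fun b _ => ?_
    simp only [Matrix.smul_apply, smul_eq_mul, vecMulVec_apply, transpose_apply, hG, Matrix.transpose, Matrix.of_apply]
    have h := Real.sq_sqrt (hqw b)
    linear_combination (-(g b i * g b j)) * h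
  have hMFG : M = F * Gᵀ := by
    ext a b
    rw [hM a b, Matrix.mul_apply]
    simp only [transpose_apply, hF, hG, Matrix.transpose, Matrix.of_apply]
    rw [Real.sqrt_mul (hpw a)]
    simp only [dotProduct, Finset.mul_sum]
    refine Finset.sum_congr rfl fun i _ => ?_
    ring
  rw [hAF, hBG, hMFG]
  rw [singularValue, singularValue]
  apply sup_mul_sup_le (sq_nonneg _) (fun x hx => hx.1) (fun x hx => hx.1)
  rintro r ⟨hr0, VA, hVA, hAcond⟩ t ⟨ht0, VB, hVB, hBcond⟩
  rcases hr0.eq_or_lt with h | hr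
  · rw [← h, zero_mul]; exact sq_nonneg _
  rcases ht0.eq_or_lt with h | ht
  · rw [← h, mul_zero]; exact sq_nonneg _
  have hVAt : VA = ⊤ := Submodule.eq_top_of_finrank_eq
    (by rw [hVA, Module.finrank_fin_fun])
  have hVBt : VB = ⊤ := Submodule.eq_top_of_finrank_eq
    (by rw [hVB, Module.finrank_fin_fun])
  subst hVAt
  subst hVBt
  exact core hp F G hr ht (fun x => hAcond x Submodule.mem_top)
    (fun x => hBcond x Submodule.mem_top)
end
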